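/- Let (V, I) be an interval system such that the lattice D(V, I) of interval decompositions has finite length. Then D(V, I) is a strong lattice: for every join-irreducible element j of D(V, I) and every x ∈ D(V, I), j ≤ j* ∨ x implies j ≤ x. -/
import Mathlib


variable {V : Type*}

/-- `Q` is a closure system on `V`: it contains `V` and is closed under
intersections of nonempty subfamilies. -/
def IsClosureSystem (Q : Set (Set V)) : Prop :=
  Set.univ ∈ Q ∧ ∀ F ⊆ Q, F.Nonempty → ⋂₀ F ∈ Q

/-- Algebraic: the union of any nonempty chain of closed sets is closed. -/
def IsAlgebraicSystem (Q : Set (Set V)) : Prop :=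
  ∀ C ⊆ Q, C.Nonempty → IsChain (· ⊆ ·) C → ⋃₀ C ∈ Q

/-- Condition (I₀): the empty set and all singletons are closed. -/
def CondI0 (Q : Set (Set V)) : Prop := ∅ ∈ Q ∧ ∀ x : V, {x} ∈ Q

/-- Condition (I₁): the union of two intersecting members is a member. -/
def CondI1 (Q : Set (Set V)) : Prop :=
  ∀ A ∈ Q, ∀ B ∈ Q, (A ∩ B).Nonempty → A ∪ B ∈ Q

/-- Condition (I₂): differences of properly overlapping members are members. -/
def CondI2 (Q : Set (Set V)) : Prop :=
  ∀ A ∈ Q, ∀ B ∈ Q, (A ∩ B).Nonempty → ¬ A ⊆ B → ¬ B ⊆ A → A \ B ∈ Q ∧ B \ A ∈ Q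

/-- An interval system: an algebraic closure system satisfying (I₀), (I₁), (I₂). -/
def IsIntervalSystem (Q : Set (Set V)) : Prop :=
  IsClosureSystem Q ∧ IsAlgebraicSystem Q ∧ CondI0 Q ∧ CondI1 Q ∧ CondI2 Q

/-- `A` is a strong set of the closure system `Q`. -/
def IsStrong (Q : Set (Set V)) (A : Set V) : Prop :=
  A ∈ Q ∧ ∀ B ∈ Q, (A ∩ B).Nonempty → A ⊆ B ∨ B ⊆ A

/-- A decomposition: a partition of `V` (coded as a setoid) all of whose
blocks belong to `Q`.  The refinement order on partitions corresponds to the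
order on `Setoid V` (finer below). -/
def IsDecomp (Q : Set (Set V)) (π : Setoid V) : Prop :=
  ∀ x : V, {y | π.r x y} ∈ Q

/-- The lattice `D(V,Q)` of decompositions, as a subtype of `Setoid V`
with the induced (refinement) partial order. -/
abbrev Decomp (Q : Set (Set V)) := {π : Setoid V // IsDecomp Q π}

/- ### Auxiliary material for the proof -/

/-- The setoid join of two decompositions is a decomposition. -/
private lemma isDecomp_sup {I : Set (Set V)} (hI : IsIntervalSystem I)
    {a b : Setoid V} (ha : IsDecomp I a) (hb : IsDecomp I b) :
    IsDecomp I (a ⊔ b) := by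
  obtain ⟨hclos, halg, hI0, hI1, hI2⟩ := hI
  intro u
  set C : Set V := {w | (a ⊔ b).r u w} with hCdef
  have hCclass : ∀ p ∈ C, ∀ q, (a ⊔ b).r p q → q ∈ C := fun p hp q hpq => (a ⊔ b).trans' hp hpq
  set S : Set (Set V) := {W | W ∈ I ∧ u ∈ W ∧ W ⊆ C} with hSdef
  have hAuS : {w | a.r u w} ∈ S :=
    ⟨ha u, a.refl' u, fun w hw => (le_sup_left : a ≤ a ⊔ b) hw⟩
  obtain ⟨W, -, hWS, hWmax⟩ := zorn_subset_nonempty S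
    (fun c hcS hchain hcne => ⟨⋃₀ c, ⟨halg c (fun A hA => (hcS hA).1) hcne hchain,
        hcne.elim (fun A hA => Set.mem_sUnion.mpr ⟨A, hA, (hcS hA).2.1⟩),
        Set.sUnion_subset fun A hA => (hcS hA).2.2⟩,
      fun A hA => Set.subset_sUnion_of_mem hA⟩) _ hAuS
  have hstep : ∀ (c : Setoid V), IsDecomp I c → c ≤ a ⊔ b →
      ∀ p, p ∈ W → ∀ q, c.r p q → q ∈ W := by
    intro c hc hcle p hp q hpq
    have hblkC : {w | c.r p w} ⊆ C := fun w hw => hCclass p (hWS.2.2 hp) w (hcle hw)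
    have hUS : W ∪ {w | c.r p w} ∈ S :=
      ⟨hI1 _ hWS.1 _ (hc p) ⟨p, hp, c.refl' p⟩, Or.inl hWS.2.1,
        Set.union_subset hWS.2.2 hblkC⟩
    exact hWmax hUS Set.subset_union_left (Or.inr hpq)
  have hkey : ∀ p q, Relation.EqvGen (fun w₁ w₂ => a w₁ w₂ ∨ b w₁ w₂) p q →
      (p ∈ W ↔ q ∈ W) := by
    intro p q h
    induction h with
    | rel p q h => exact ⟨fun hp => h.elim (fun h' => hstep a ha le_sup_left p hp q h')
                          (fun h' => hstep b hb le_sup_right p hp q h'),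
                         fun hq => h.elim (fun h' => hstep a ha le_sup_left q hq p (a.symm' h'))
                          (fun h' => hstep b hb le_sup_right q hq p (b.symm' h'))⟩
    | refl p => exact Iff.rfl
    | symm p q _ ih => exact ih.symm
    | trans p q r _ _ ih1 ih2 => exact ih1.trans ih2
  have hCW : C = W := by
    apply Set.Subset.antisymm _ hWS.2.2
    intro w hw
    have h1 : (a ⊔ b) u w := hw
    rw [Setoid.sup_eq_eqvGen] at h1
    exact (hkey u w h1).mp hWS.2.1
  show C ∈ I
  rw [hCW]; exact hWS.1

/-- The setoid meet of two decompositions is a decomposition. -/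
private lemma isDecomp_inf {I : Set (Set V)} (hI : IsIntervalSystem I)
    {a b : Setoid V} (ha : IsDecomp I a) (hb : IsDecomp I b) :
    IsDecomp I (a ⊓ b) := by
  intro p
  have h : {q | (a ⊓ b).r p q} = ⋂₀ {A | A = {q | a.r p q} ∨ A = {q | b.r p q}} := by
    ext q
    simp only [Set.mem_sInter, Set.mem_setOf_eq]
    constructor
    · rintro ⟨h1, h2⟩ A (rfl | rfl)
      exacts [h1, h2]
    · intro h
      exact ⟨h _ (Or.inl rfl), h _ (Or.inr rfl)⟩
  rw [h]
  exact hI.1.2 _ (by rintro A (rfl | rfl); exacts [ha p, hb p]) ⟨_, Or.inl rfl⟩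

/-- The restriction of a setoid `x` to a set `J` (identity outside `J`). -/
private def restrictSetoid (x : Setoid V) (J : Set V) : Setoid V where
  r p q := p = q ∨ (x.r p q ∧ p ∈ J ∧ q ∈ J)
  iseqv := by
    refine ⟨fun p => Or.inl rfl, ?_, ?_⟩
    · rintro p q (rfl | ⟨h, h1, h2⟩)
      · exact Or.inl rfl
      · exact Or.inr ⟨x.symm' h, h2, h1⟩
    · rintro p q r (rfl | ⟨h, h1, h2⟩) hqr
      · exact hqr
      · rcases hqr with rfl | ⟨h', h1', h2'⟩
        · exact Or.inr ⟨h, h1, h2⟩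
        · exact Or.inr ⟨x.trans' h h', h1, h2'⟩

private lemma isDecomp_restrict {I : Set (Set V)} (hI : IsIntervalSystem I)
    {x : Setoid V} (hx : IsDecomp I x) {J : Set V} (hJ : J ∈ I) :
    IsDecomp I (restrictSetoid x J) := by
  intro p
  by_cases hp : p ∈ J
  · have h : {q | (restrictSetoid x J).r p q}
        = ⋂₀ {A | A = {q | x.r p q} ∨ A = J} := by
      ext q
      simp only [Set.mem_sInter, Set.mem_setOf_eq]
      constructor
      · intro hq A hA
        rcases hA with rfl | rfl
        · rcases hq with rfl | ⟨h, -, -⟩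
          · exact x.refl' p
          · exact h
        · rcases hq with rfl | ⟨-, -, h2⟩
          · exact hp
          · exact h2
      · intro h
        exact Or.inr ⟨h _ (Or.inl rfl), hp, h _ (Or.inr rfl)⟩
    rw [h]
    exact hI.1.2 _ (by rintro A (rfl | rfl); exacts [hx p, hJ]) ⟨_, Or.inl rfl⟩
  · have h : {q | (restrictSetoid x J).r p q} = {p} := by
      ext q
      constructor
      · rintro (rfl | ⟨-, h1, -⟩)
        · rfl
        · exact absurd h1 hp
      · rintro rfl
        exact Or.inl rfl
    rw [h]
    exact hI.2.2.1.2 p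

/-- In a poset of finite length, every nonempty set has a maximal element. -/
private lemma exists_maximal_of_finLength {α : Type*} [PartialOrder α]
    (hfl : ∃ n : ℕ, ∀ c : LTSeries α, c.length ≤ n)
    {S : Set α} (hS : S.Nonempty) : ∃ m ∈ S, ∀ y ∈ S, ¬ m < y := by
  by_contra h
  push_neg at h
  obtain ⟨n, hn⟩ := hfl
  obtain ⟨y0, hy0⟩ := hS
  have hstep : ∀ p : {y // y ∈ S}, ∃ q : {y // y ∈ S}, p.1 < q.1 := by
    intro p
    obtain ⟨q, hqS, hq⟩ := h p.1 p.2
    exact ⟨⟨q, hqS⟩, hq⟩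
  choose f hf using hstep
  set seq : ℕ → {y // y ∈ S} := fun k => f^[k] ⟨y0, hy0⟩ with hseq
  have hmono : StrictMono (fun k => (seq k).1) := by
    apply strictMono_nat_of_lt_succ
    intro k
    have h1 : seq (k + 1) = f (seq k) := Function.iterate_succ_apply' f k _
    rw [h1]
    exact hf (seq k)
  have hcon := hn ⟨n + 1, fun i => (seq i.1).1, fun i => by
    have := hmono (Nat.lt_succ_self i.1)
    simpa using this⟩
  exact Nat.not_succ_le_self n hcon

/- ### The main theorem -/

/-- If `D(V,I)` has finite length then it is a strong lattice: for every
join-irreducible `j` and every `x`, `j ≤ j* ∨ x` implies `j ≤ x`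
(joins in `D(V,I)` are expressed as least upper bounds). -/
theorem stmt16 (I : Set (Set V)) (hI : IsIntervalSystem I)
    (hfl : ∃ n : ℕ, ∀ c : LTSeries (Decomp I), c.length ≤ n)
    (j : Decomp I)
    (hj : j.1 ≠ ⊥ ∧ ∀ a b : Decomp I, IsLUB {a, b} j → j = a ∨ j = b)
    (jstar : Decomp I) (hstar : IsLUB {y : Decomp I | y < j} jstar)
    (x s : Decomp I) (hs : IsLUB {jstar, x} s) (hle : j ≤ s) :
    j ≤ x := by
  classical
  obtain ⟨hj1, hj2⟩ := hj
  -- binary joins in Decomp I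
  have hDjoin : ∀ a b : Decomp I,
      IsLUB {a, b} (⟨a.1 ⊔ b.1, isDecomp_sup hI a.2 b.2⟩ : Decomp I) := by
    intro a b
    constructor
    · intro p hp
      simp only [Set.mem_insert_iff, Set.mem_singleton_iff] at hp
      rcases hp with rfl | rfl
      · exact (le_sup_left : p.1 ≤ p.1 ⊔ b.1)
      · exact (le_sup_right : p.1 ≤ a.1 ⊔ p.1)
    · intro w hw
      have h1 : a ≤ w := hw (Set.mem_insert _ _)
      have h2 : b ≤ w := hw (Set.mem_insert_of_mem _ rfl)
      exact (sup_le h1 h2 : a.1 ⊔ b.1 ≤ w.1)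
  -- jstar ≤ j
  have hjsj : jstar ≤ j := hstar.2 (fun y hy => le_of_lt hy)
  -- the bottom decomposition
  have hbotdec : IsDecomp I (⊥ : Setoid V) := by
    intro p
    have h : {q | (⊥ : Setoid V).r p q} = {p} := by
      ext q
      exact ⟨fun h => h.symm, fun h => h.symm⟩
    rw [h]
    exact hI.2.2.1.2 p
  -- jstar ≠ j, using finite length and join-irreducibility
  have hne : jstar ≠ j := by
    intro heq
    have hbotlt : (⟨⊥, hbotdec⟩ : Decomp I) < j := by
      refine lt_of_le_of_ne (show (⊥ : Setoid V) ≤ j.1 from bot_le) ?_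
      intro h
      exact hj1 (congrArg Subtype.val h.symm)
    obtain ⟨m, hmS, hmmax⟩ := exists_maximal_of_finLength hfl (S := {y : Decomp I | y < j}) ⟨_, hbotlt⟩
    have hub : m ∈ upperBounds {y : Decomp I | y < j} := by
      intro y hy
      set c : Decomp I := ⟨y.1 ⊔ m.1, isDecomp_sup hI y.2 m.2⟩ with hc
      have hcj : c ≤ j := (sup_le (le_of_lt hy) (le_of_lt hmS) : y.1 ⊔ m.1 ≤ j.1)
      have hcne : c ≠ j := by
        intro hceq
        have := hDjoin y m
        rw [← hc, hceq] at this
        rcases hj2 y m this with h | h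
        · exact (ne_of_lt hy) h.symm
        · exact (ne_of_lt hmS) h.symm
      have hclt : c < j := lt_of_le_of_ne hcj hcne
      have hmc : m ≤ c := (le_sup_right : m.1 ≤ y.1 ⊔ m.1)
      have hcm : c = m := by
        rcases hmc.lt_or_eq with h | h
        · exact absurd h (hmmax c hclt)
        · exact h.symm
      calc y ≤ c := (le_sup_left : y.1 ≤ y.1 ⊔ m.1)
        _ = m := hcm
    have hjm : j ≤ m := by rw [← heq]; exact hstar.2 hub
    exact lt_irrefl j (lt_of_le_of_lt hjm hmS)
  have hlt : jstar < j := lt_of_le_of_ne hjsj hne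
  -- dichotomy: everything ≤ j is = j or ≤ jstar
  have hDich : ∀ y : Decomp I, y ≤ j → y = j ∨ y ≤ jstar := by
    intro y hy
    rcases hy.lt_or_eq with h | h
    · exact Or.inr (hstar.1 h)
    · exact Or.inl h
  -- witnesses where j and jstar differ
  have hex : ∃ u v, j.1.r u v ∧ ¬ jstar.1.r u v := by
    by_contra hc
    push_neg at hc
    have : j ≤ jstar := fun u v huv => hc u v huv
    exact hne (le_antisymm hjsj this)
  obtain ⟨u₀, v₀, hu₀v₀, hnst⟩ := hex
  set J₀ : Set V := {w | j.1.r u₀ w} with hJ₀def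
  have hJ₀ : J₀ ∈ I := j.2 u₀
  have hJ2 : ∀ a b, a ∈ J₀ → b ∈ J₀ → j.1.r a b := fun a b ha hb =>
    j.1.trans' (j.1.symm' ha) hb
  -- the "one nontrivial block" decomposition z with block J₀
  have htopdec : IsDecomp I (⊤ : Setoid V) := by
    intro p
    have h : {q | (⊤ : Setoid V).r p q} = Set.univ := by
      ext q; exact ⟨fun _ => trivial, fun _ => trivial⟩
    rw [h]
    exact hI.1.1
  set z : Decomp I := ⟨restrictSetoid ⊤ J₀, isDecomp_restrict hI htopdec hJ₀⟩ with hzdef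
  have hzj : z ≤ j := by
    intro a b hab
    rcases hab with rfl | ⟨-, h1, h2⟩
    · exact j.1.refl' a
    · exact hJ2 a b h1 h2
  have hzeq : z = j := by
    rcases hDich z hzj with h | h
    · exact h
    · exfalso
      exact hnst (h (Or.inr ⟨trivial, j.1.refl' u₀, hu₀v₀⟩))
  -- structure of j: j relates a b iff a = b or a, b ∈ J₀
  have hJ1 : ∀ a b, j.1.r a b → a = b ∨ (a ∈ J₀ ∧ b ∈ J₀) := by
    intro a b hab
    have : z.1.r a b := by rw [hzeq]; exact hab
    rcases this with rfl | ⟨-, h1, h2⟩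
    · exact Or.inl rfl
    · exact Or.inr ⟨h1, h2⟩
  -- x restricted to J₀
  set xr : Decomp I := ⟨restrictSetoid x.1 J₀, isDecomp_restrict hI x.2 hJ₀⟩ with hxrdef
  set y : Decomp I := ⟨jstar.1 ⊔ xr.1, isDecomp_sup hI jstar.2 xr.2⟩ with hydef
  have hyj : y ≤ j := by
    refine (sup_le (le_of_lt hlt) ?_ : jstar.1 ⊔ xr.1 ≤ j.1)
    intro a b hab
    rcases hab with rfl | ⟨-, h1, h2⟩
    · exact j.1.refl' a
    · exact hJ2 a b h1 h2
  -- the meet t = j ⊓ x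
  set t : Decomp I := ⟨j.1 ⊓ x.1, isDecomp_inf hI j.2 x.2⟩ with htdef
  -- identify s with the concrete join of jstar and x
  have hseq : s = ⟨jstar.1 ⊔ x.1, isDecomp_sup hI jstar.2 x.2⟩ := hs.unique (hDjoin jstar x)
  have hjsx : j.1 ≤ jstar.1 ⊔ x.1 := by
    have := hle
    rw [hseq] at this
    exact this
  -- main step: j.1 ≤ jstar.1 ⊔ t.1
  have hmain : j.1 ≤ jstar.1 ⊔ t.1 := by
    intro u v huv
    rcases hJ1 u v huv with rfl | ⟨huJ, hvJ⟩
    · exact (jstar.1 ⊔ t.1).refl' u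
    · rcases hDich y hyj with hy_eq | hy_le
      · -- y = j, so j = jstar ⊔ xr ≤ jstar ⊔ t
        have hxrt : xr.1 ≤ t.1 := by
          intro p q hpq
          rcases hpq with rfl | ⟨hx, hp, hq⟩
          · exact t.1.refl' p
          · exact ⟨hJ2 p q hp hq, hx⟩
        have hle2 : j.1 ≤ jstar.1 ⊔ t.1 := by
          have h1 : j.1 = jstar.1 ⊔ xr.1 := congrArg Subtype.val hy_eq.symm
          rw [h1]
          exact sup_le_sup_left hxrt _
        exact hle2 huv
      · -- y ≤ jstar: connectivity argument
        have hXJ : ∀ p q, x.1.r p q → p ∈ J₀ → q ∈ J₀ → jstar.1.r p q := by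
          intro p q hx hp hq
          exact hy_le ((le_sup_right : xr.1 ≤ jstar.1 ⊔ xr.1) (Or.inr ⟨hx, hp, hq⟩))
        set Z : Set V := {w | jstar.1.r u w ∨ ∃ p, jstar.1.r u p ∧ x.1.r p w} with hZdef
        have hDuJ : ∀ w, jstar.1.r u w → w ∈ J₀ := by
          intro w hw
          rcases hJ1 u w (hlt.le hw) with rfl | h
          · exact huJ
          · exact h.2
        have hZj : ∀ p q, jstar.1.r p q → p ∈ Z → q ∈ Z := by
          intro p q hpq hp
          rcases hp with hp | ⟨r, hur, hrp⟩
          · exact Or.inl (jstar.1.trans' hp hpq)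
          · by_cases hpJ : p ∈ J₀
            · have hrJ : r ∈ J₀ := hDuJ r hur
              have hup : jstar.1.r u p := jstar.1.trans' hur (hXJ r p hrp hrJ hpJ)
              exact Or.inl (jstar.1.trans' hup hpq)
            · rcases hJ1 p q (hlt.le hpq) with rfl | ⟨hpJ', -⟩
              · exact Or.inr ⟨r, hur, hrp⟩
              · exact absurd hpJ' hpJ
        have hZx : ∀ p q, x.1.r p q → p ∈ Z → q ∈ Z := by
          intro p q hpq hp
          rcases hp with hp | ⟨r, hur, hrp⟩
          · exact Or.inr ⟨p, hp, hpq⟩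
          · exact Or.inr ⟨r, hur, x.1.trans' hrp hpq⟩
        have hkey : ∀ p q, Relation.EqvGen (fun a b => jstar.1 a b ∨ x.1 a b) p q →
            (p ∈ Z ↔ q ∈ Z) := by
          intro p q h
          induction h with
          | rel a b h => exact ⟨fun ha => h.elim (fun h' => hZj a b h' ha)
                              (fun h' => hZx a b h' ha),
                            fun hb => h.elim (fun h' => hZj b a (jstar.1.symm' h') hb)
                              (fun h' => hZx b a (x.1.symm' h') hb)⟩
          | refl a => exact Iff.rfl
          | symm a b _ ih => exact ih.symm
          | trans a b c _ _ ih1 ih2 => exact ih1.trans ih2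
        have hvZ : v ∈ Z := by
          have h1 : (jstar.1 ⊔ x.1) u v := hjsx huv
          rw [Setoid.sup_eq_eqvGen] at h1
          exact (hkey u v h1).mp (Or.inl (jstar.1.refl' u))
        have huvst : jstar.1.r u v := by
          rcases hvZ with h | ⟨p, hup, hpv⟩
          · exact h
          · exact jstar.1.trans' hup (hXJ p v hpv (hDuJ p hup) hvJ)
        exact (le_sup_left : jstar.1 ≤ jstar.1 ⊔ t.1) huvst
  -- finish by join-irreducibility
  have hIsLUB : IsLUB ({jstar, t} : Set (Decomp I)) j := by
    constructor
    · intro p hp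
      simp only [Set.mem_insert_iff, Set.mem_singleton_iff] at hp
      rcases hp with rfl | rfl
      · exact hlt.le
      · exact (inf_le_left : j.1 ⊓ x.1 ≤ j.1)
    · intro w hw
      have h1 : jstar ≤ w := hw (Set.mem_insert _ _)
      have h2 : t ≤ w := hw (Set.mem_insert_of_mem _ rfl)
      show j.1 ≤ w.1
      exact le_trans hmain (sup_le h1 h2 : jstar.1 ⊔ t.1 ≤ w.1)
  rcases hj2 jstar t hIsLUB with h | h
  · exact absurd h.symm hne
  · show j.1 ≤ x.1
    rw [h]
    exact (inf_le_right : j.1 ⊓ x.1 ≤ x.1)
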